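/- Let 0 < α < 1 and define for τ > 0, t ∈ ℝ, P^α_τ f(t) = (1/(4^α Γ(α))) ∫₀^∞ τ^{2α} e^{-τ²/(4s)} s^{-1-α} f(t-s) ds. If f(s) = Σ_{k∈ℤ} (−1)^k 1_{(−a^{2k+1}, −a^{2k}]}(s) for some a > 1, then f(a^{2j} s) = (−1)^j f(s) for all j ∈ ℤ and almost every s, and consequently P^α_{a^j} f(0) = (−1)^j P^α_{1} f(0) for all j ∈ ℤ. -/

import Mathlib

open Real MeasureTheory

/-- The one-sided fractional Poisson-type operator. -/
noncomputable def fracPoisson (α τ : ℝ) (f : ℝ → ℝ) (t : ℝ) : ℝ :=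
  (1 / (4 ^ α * Real.Gamma α)) *
    ∫ s in Set.Ioi (0:ℝ), τ ^ (2 * α) * Real.exp (-τ ^ 2 / (4 * s)) / s ^ (1 + α) * f (t - s)

theorem stmt_12 (α a : ℝ) (hα0 : 0 < α) (hα1 : α < 1) (ha : 1 < a)
    (f : ℝ → ℝ)
    (hf : ∀ s, f s = ∑' k : ℤ,
        if s ∈ Set.Ioc (-a ^ (2 * k + 1)) (-a ^ (2 * k)) then ((-1 : ℝ)) ^ k else 0) :
    (∀ (j : ℤ) (s : ℝ), f (a ^ (2 * j) * s) = ((-1 : ℝ)) ^ j * f s) ∧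
    (∀ j : ℤ, fracPoisson α (a ^ j) f 0 = ((-1 : ℝ)) ^ j * fracPoisson α 1 f 0) := by
  have ha0 : (0:ℝ) < a := lt_trans one_pos ha
  have hane : a ≠ 0 := ne_of_gt ha0
  have key : ∀ (j : ℤ) (s : ℝ), f (a ^ (2 * j) * s) = ((-1 : ℝ)) ^ j * f s := by
    intro j s
    have hc : (0:ℝ) < a ^ (2 * j) := zpow_pos ha0 _
    rw [hf (a ^ (2*j) * s), hf s, ← tsum_mul_left]
    rw [← (Equiv.addRight j).tsum_eq (fun k : ℤ =>
      if a ^ (2*j) * s ∈ Set.Ioc (-a ^ (2 * k + 1)) (-a ^ (2 * k)) then ((-1 : ℝ)) ^ k else 0)]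
    refine tsum_congr fun k => ?_
    simp only [Equiv.coe_addRight]
    have h1 : a ^ (2 * (k + j) + 1) = a ^ (2*j) * a ^ (2*k+1) := by
      rw [← zpow_add₀ hane]; ring_nf
    have h2 : a ^ (2 * (k + j)) = a ^ (2*j) * a ^ (2*k) := by
      rw [← zpow_add₀ hane]; ring_nf
    have hmem : (a ^ (2*j) * s ∈ Set.Ioc (-a ^ (2 * (k+j) + 1)) (-a ^ (2 * (k+j))))
        ↔ s ∈ Set.Ioc (-a ^ (2*k+1)) (-a ^ (2*k)) := by
      rw [Set.mem_Ioc, Set.mem_Ioc, h1, h2, ← mul_neg, ← mul_neg,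
        mul_lt_mul_iff_right₀ hc, mul_le_mul_iff_right₀ hc]
    have hpow : ((-1 : ℝ)) ^ (k + j) = (-1:ℝ) ^ j * (-1:ℝ) ^ k := by
      rw [zpow_add₀ (by norm_num : (-1:ℝ) ≠ 0)]; ring
    simp only [hmem]
    rw [hpow, mul_ite, mul_zero]
  refine ⟨key, fun j => ?_⟩
  have hc : (0:ℝ) < a ^ (2 * j) := zpow_pos ha0 _
  have hcne : a ^ (2 * j) ≠ 0 := ne_of_gt hc
  set c : ℝ := a ^ (2 * j) with hcdef
  set G : ℝ → ℝ := fun s =>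
    (a^j) ^ (2 * α) * Real.exp (-(a^j) ^ 2 / (4 * s)) / s ^ (1 + α) * f (0 - s) with hG
  set H : ℝ → ℝ := fun s =>
    (1:ℝ) ^ (2 * α) * Real.exp (-(1:ℝ) ^ 2 / (4 * s)) / s ^ (1 + α) * f (0 - s) with hH
  have hsub := integral_comp_mul_left_Ioi G 0 hc
  rw [mul_zero] at hsub
  have hptwise : ∀ x ∈ Set.Ioi (0:ℝ), G (c * x) = c⁻¹ * ((-1:ℝ)^j * H x) := by
    intro x hx
    have hx0 : (0:ℝ) < x := hx
    have hsq : (a^j) ^ (2:ℕ) = c := by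
      rw [sq, ← zpow_add₀ hane, hcdef, two_mul]
    have hpowa : (a^j) ^ (2 * α) = c ^ α := by
      rw [Real.rpow_mul (zpow_pos ha0 j).le 2 α,
        show (2:ℝ) = ((2:ℕ):ℝ) by norm_num, Real.rpow_natCast, hsq]
    have hexp : -(a^j) ^ 2 / (4 * (c * x)) = -(1:ℝ)^2 / (4 * x) := by
      rw [hsq]
      field_simp
    have hfc : f (0 - c * x) = (-1:ℝ)^j * f (0 - x) := by
      have := key j (-x)
      rw [show c * -x = 0 - c * x by ring] at this
      rw [this, show (-x : ℝ) = 0 - x by ring]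
    have hmulr : (c * x) ^ (1 + α) = (c * c ^ α) * x ^ (1 + α) := by
      rw [Real.mul_rpow hc.le hx0.le, Real.rpow_add hc, Real.rpow_one]
    have hcα : c ^ α ≠ 0 := (Real.rpow_pos_of_pos hc α).ne'
    have hxα : x ^ (1 + α) ≠ 0 := (Real.rpow_pos_of_pos hx0 _).ne'
    simp only [hG, hH, hpowa, hexp, hfc, hmulr, Real.one_rpow, one_pow]
    field_simp
  have hint : ∫ x in Set.Ioi (0:ℝ), G (c * x)
      = ∫ x in Set.Ioi (0:ℝ), c⁻¹ * ((-1:ℝ)^j * H x) :=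
    setIntegral_congr_fun measurableSet_Ioi hptwise
  have hIG : ∫ s in Set.Ioi (0:ℝ), G s = (-1:ℝ)^j * ∫ s in Set.Ioi (0:ℝ), H s := by
    have : (∫ x in Set.Ioi (0:ℝ), G (c * x))
        = c⁻¹ * ((-1:ℝ)^j * ∫ s in Set.Ioi (0:ℝ), H s) := by
      rw [hint, integral_const_mul, integral_const_mul]
    rw [this] at hsub
    rw [smul_eq_mul] at hsub
    field_simp at hsub
    linarith [hsub]
  show (1 / (4 ^ α * Real.Gamma α)) * ∫ s in Set.Ioi (0:ℝ), G s
      = (-1:ℝ)^j * ((1 / (4 ^ α * Real.Gamma α)) * ∫ s in Set.Ioi (0:ℝ), H s)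
  rw [hIG]; ring
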